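/- arXiv:1203.4126 — 2 statements merged into one kernel-verified Lean document; each statement's English description precedes it below -/
import Mathlib

section
/- Let (a_n)_{n∈ℕ} be any sequence of pairwise distinct integers. Then for Lebesgue-almost every real number x, the sequence (a_n x)_{n∈ℕ} is uniformly distributed modulo one. -/
open MeasureTheory Filter
open scoped Classical

/-- A sequence of reals is uniformly distributed modulo one. -/
def UnifDistModOne (u : ℕ → ℝ) : Prop :=
  ∀ a b : ℝ, 0 ≤ a → a ≤ b → b ≤ 1 →
    Filter.Tendsto
      (fun n : ℕ =>
        (((Finset.range n).filter (fun j => Int.fract (u j) ∈ Set.Icc a b)).card : ℝ) / n)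
      Filter.atTop (nhds (b - a))

open Set Metric

instance fact_zero_lt_one_real : Fact ((0:ℝ) < 1) := ⟨one_pos⟩

noncomputable def eC (m : ℤ) (t : ℝ) : ℂ := Complex.exp (2 * Real.pi * Complex.I * m * t)

lemma eC_eq_fourier (m : ℤ) (t : ℝ) : eC m t = fourier m (t : AddCircle (1:ℝ)) := by
  rw [fourier_coe_apply]
  simp [eC]

lemma eC_norm (m : ℤ) (t : ℝ) : ‖eC m t‖ = 1 := by
  rw [eC]
  have : (2 * (Real.pi:ℂ) * Complex.I * m * t) = ((2 * Real.pi * m * t : ℝ) : ℂ) * Complex.I := by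
    push_cast; ring
  rw [this, Complex.norm_exp_ofReal_mul_I]

lemma eC_mul_conj (m m' : ℤ) (t : ℝ) :
    eC m t * (starRingEnd ℂ) (eC m' t) = eC (m - m') t := by
  rw [eC, eC, eC, ← Complex.exp_conj, ← Complex.exp_add]
  congr 1
  have : (starRingEnd ℂ) (2 * (Real.pi:ℂ) * Complex.I * m' * t) = -(2 * Real.pi * Complex.I * m' * t) := by
    simp only [map_mul, Complex.conj_I, Complex.conj_ofReal, map_ofNat, map_intCast]
    ring
  rw [this]
  push_cast
  ring

lemma eC_zero (t : ℝ) : eC 0 t = 1 := by simp [eC]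

lemma volume_addCircle_one : (volume : Measure (AddCircle (1:ℝ))) = AddCircle.haarAddCircle := by
  rw [AddCircle.volume_eq_smul_haarAddCircle]
  simp

lemma integral_fourier_eq_zero {m : ℤ} (hm : m ≠ 0) :
    ∫ b : AddCircle (1:ℝ), fourier m b ∂AddCircle.haarAddCircle = 0 :=
  integral_eq_zero_of_add_right_eq_neg (fourier_add_half_inv_index hm one_pos)

lemma integral_eC (m : ℤ) (hm : m ≠ 0) (k : ℝ) :
    ∫ x in Ioc k (k + 1), eC m x = 0 := by
  have h1 : ∫ x in Ioc k (k + 1), eC m x = ∫ b : AddCircle (1:ℝ), fourier m b := by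
    simp_rw [eC_eq_fourier]
    exact AddCircle.integral_preimage 1 k (fun z => fourier m z)
  rw [h1, volume_addCircle_one]
  exact integral_fourier_eq_zero hm

lemma my_integral_ofReal {μ : MeasureTheory.Measure ℝ} {f : ℝ → ℝ} :
    ∫ x, ((f x : ℝ) : ℂ) ∂μ = ((∫ x, f x ∂μ : ℝ) : ℂ) := integral_ofReal

lemma eC_continuous (m : ℤ) : Continuous (eC m) := by
  unfold eC; fun_prop

lemma eC_integrableOn (m : ℤ) (k : ℝ) : IntegrableOn (eC m) (Ioc k (k+1)) := by
  apply (eC_continuous m).integrableOn_Ioc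

lemma sum_eC_sq_integral (c : ℕ → ℤ) (hc : Function.Injective c) (N : ℕ) (k : ℝ) :
    ∫ x in Ioc k (k + 1), (‖∑ j ∈ Finset.range N, eC (c j) x‖ ^ 2 : ℝ) = N := by
  have key : ∫ x in Ioc k (k + 1),
      ((∑ j ∈ Finset.range N, eC (c j) x) * (starRingEnd ℂ) (∑ j ∈ Finset.range N, eC (c j) x)) = N := by
    have expand : ∀ x : ℝ, (∑ j ∈ Finset.range N, eC (c j) x) * (starRingEnd ℂ) (∑ j ∈ Finset.range N, eC (c j) x)
        = ∑ j ∈ Finset.range N, ∑ j' ∈ Finset.range N, eC (c j - c j') x := by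
      intro x
      rw [map_sum, Finset.sum_mul_sum]
      exact Finset.sum_congr rfl fun j _ => Finset.sum_congr rfl fun j' _ => eC_mul_conj _ _ _
    simp_rw [expand]
    rw [integral_finset_sum]
    · have : ∀ j ∈ Finset.range N, (∫ x in Ioc k (k+1), ∑ j' ∈ Finset.range N, eC (c j - c j') x) = 1 := by
        intro j _
        rw [integral_finset_sum]
        · rw [Finset.sum_eq_single j]
          · rw [sub_self]
            simp_rw [eC_zero]
            simp
          · intro j' _ hne
            exact integral_eC _ (sub_ne_zero.mpr fun h => hne (hc h).symm) k
          · intro hj; exact absurd (by assumption) hj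
        · intro j' _; exact eC_integrableOn _ _
      rw [Finset.sum_congr rfl this]
      simp
    · intro j _
      apply integrable_finset_sum
      intro j' _
      exact eC_integrableOn _ _
  have conv : ∀ x : ℝ, ((‖∑ j ∈ Finset.range N, eC (c j) x‖ ^ 2 : ℝ) : ℂ)
      = (∑ j ∈ Finset.range N, eC (c j) x) * (starRingEnd ℂ) (∑ j ∈ Finset.range N, eC (c j) x) := by
    intro x
    rw [Complex.mul_conj, Complex.normSq_eq_norm_sq]
  simp_rw [← conv] at key
  rw [my_integral_ofReal] at key
  exact_mod_cast key

-- covering lemma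
lemma ae_of_ae_restrict_Ioc {P : ℝ → Prop}
    (h : ∀ k : ℤ, ∀ᵐ x ∂(volume.restrict (Ioc (k:ℝ) (k+1))), P x) :
    ∀ᵐ x ∂(volume : Measure ℝ), P x := by
  rw [ae_iff]
  have hcov : {x : ℝ | ¬ P x} ⊆ ⋃ k : ℤ, {x : ℝ | ¬ P x} ∩ Ioc (k:ℝ) (k+1) := by
    intro x hx
    have : x ∈ ⋃ k : ℤ, Ioc (k:ℝ) (k+1) := by rw [iUnion_Ioc_intCast]; trivial
    obtain ⟨s, ⟨k, rfl⟩, hks⟩ := this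
    exact mem_iUnion.2 ⟨k, hx, hks⟩
  refine le_antisymm (le_trans (measure_mono hcov) ?_) zero_le
  refine le_trans (measure_iUnion_le _) ?_
  have : ∀ k : ℤ, volume ({x : ℝ | ¬ P x} ∩ Ioc (k:ℝ) (k+1)) = 0 := by
    intro k
    have := h k
    rw [ae_iff] at this
    rwa [Measure.restrict_apply' measurableSet_Ioc] at this
  simp [this]

lemma tendsto_nat_sqrt_atTop : Tendsto Nat.sqrt atTop atTop := by
  apply tendsto_atTop_atTop.mpr
  intro b
  exact ⟨b * b, fun n hn => Nat.le_sqrt.mpr hn⟩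

-- the main a.e. statement for fixed injective c
lemma ae_tendsto_sum_eC (c : ℕ → ℤ) (hc : Function.Injective c) :
    ∀ᵐ x ∂(volume : Measure ℝ),
      Tendsto (fun N : ℕ => (∑ j ∈ Finset.range N, eC (c j) x) / N) atTop (nhds 0) := by
  apply ae_of_ae_restrict_Ioc
  intro k
  set μ := volume.restrict (Ioc (k:ℝ) (k+1)) with hμ
  set F : ℕ → ℝ → ℂ := fun N x => ∑ j ∈ Finset.range N, eC (c j) x with hF
  have hFcont : ∀ N, Continuous (F N) := fun N => by
    apply continuous_finset_sum; intro j _; exact eC_continuous _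
  -- squares converge a.e.
  have hsq : ∀ᵐ x ∂μ, Tendsto (fun n : ℕ => ‖F ((n+1)^2) x‖ / ((n+1)^2 : ℕ)) atTop (nhds 0) := by
    set G : ℕ → ℝ → ENNReal := fun n x => ENNReal.ofReal ((‖F ((n+1)^2) x‖ / ((n+1)^2 : ℕ))^2)
      with hG
    have hGint : ∀ n, ∫⁻ x, G n x ∂μ = ENNReal.ofReal (1 / ((n+1)^2 : ℕ)) := by
      intro n
      rw [hG]
      simp only
      rw [← ofReal_integral_eq_lintegral_ofReal]
      · congr 1
        have : ∀ x : ℝ, (‖F ((n+1)^2) x‖ / ((n+1)^2 : ℕ))^2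
            = (‖F ((n+1)^2) x‖^2) * (1 / (((n+1)^2 : ℕ) : ℝ))^2 := by
          intro x; field_simp
        simp_rw [this]
        rw [integral_mul_const, hμ, sum_eC_sq_integral c hc]
        have hne : ((((n:ℝ)+1)^2)) ≠ 0 := by positivity
        field_simp
      · rw [hμ]
        exact (((hFcont _).norm.div_const _).pow 2).integrableOn_Ioc
      · filter_upwards with x using by positivity
    have hsum : ∑' n, ∫⁻ x, G n x ∂μ ≠ ⊤ := by
      rw [funext fun n => hGint n]
      have hs : Summable (fun n : ℕ => (1 / (((n+1)^2 : ℕ) : ℝ))) := by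
        have h2 : Summable (fun n : ℕ => 1 / ((n:ℝ)) ^ 2) :=
          Real.summable_one_div_nat_pow.mpr one_lt_two
        have h3 := (summable_nat_add_iff 1).mpr h2
        apply h3.congr
        intro n
        push_cast
        ring
      rw [← ENNReal.ofReal_tsum_of_nonneg (fun n => by positivity) hs]
      exact ENNReal.ofReal_ne_top
    have hae : ∀ᵐ x ∂μ, ∑' n, G n x ≠ ⊤ := by
      have hmeas : ∀ n, Measurable fun x => G n x := by
        intro n
        apply ENNReal.measurable_ofReal.comp
        apply Measurable.pow_const
        apply Measurable.div_const
        exact ((hFcont _).measurable).norm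
      have := lintegral_tsum (fun n => (hmeas n).aemeasurable) (μ := μ)
      have hlt : ∫⁻ x, ∑' n, G n x ∂μ < ⊤ := by
        rw [this]; exact lt_of_le_of_ne le_top hsum
      exact ae_lt_top (by measurability) hlt.ne |>.mono fun x hx => hx.ne
    filter_upwards [hae] with x hx
    have h0 : Tendsto (fun n => G n x) atTop (nhds 0) :=
      ENNReal.tendsto_atTop_zero_of_tsum_ne_top hx
    -- convert to real
    have h1 : Tendsto (fun n : ℕ => (‖F ((n+1)^2) x‖ / ((n+1)^2 : ℕ))^2) atTop (nhds 0) := by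
      have := (ENNReal.tendsto_toReal ENNReal.zero_ne_top).comp h0
      simp only [Function.comp_def, ENNReal.toReal_zero] at this
      convert this using 2 with n
      exact (ENNReal.toReal_ofReal (by positivity)).symm
    have h2 := h1.sqrt
    simp only [Real.sqrt_zero] at h2
    convert h2 using 2 with n
    exact (Real.sqrt_sq (by positivity)).symm
  -- fill in between squares
  filter_upwards [hsq] with x hx
  have hx' : Tendsto (fun n : ℕ => ‖F (n^2) x‖ / ((n^2 : ℕ) : ℝ)) atTop (nhds 0) := by
    rw [← tendsto_add_atTop_iff_nat 1]
    exact_mod_cast hx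
  rw [tendsto_zero_iff_norm_tendsto_zero]
  have hbound : ∀ N : ℕ, 1 ≤ N → ‖F N x / N‖ ≤
      ‖F ((Nat.sqrt N)^2) x‖ / (((Nat.sqrt N)^2 : ℕ) : ℝ)
        + 2 * (Nat.sqrt N : ℝ) / (((Nat.sqrt N)^2 : ℕ) : ℝ) := by
    intro N hN
    set s := Nat.sqrt N with hs
    have hs1 : 1 ≤ s := Nat.le_sqrt.mpr (by simpa using hN)
    have hsle : s^2 ≤ N := Nat.sqrt_le' N
    have h2s : (N - s^2 : ℕ) ≤ 2*s := by
      have h1 : N < (s+1)^2 := Nat.lt_succ_sqrt' N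
      have h2 : (s+1)^2 = s^2 + 2*s + 1 := by ring
      omega
    have hdiff : ‖F N x - F (s^2) x‖ ≤ ((N - s^2 : ℕ) : ℝ) := by
      rw [hF]
      simp only
      rw [← Finset.sum_Ico_eq_sub _ hsle]
      refine le_trans (norm_sum_le _ _) ?_
      rw [← Nat.card_Ico]
      refine le_trans (Finset.sum_le_card_nsmul _ _ 1 fun j _ => le_of_eq (eC_norm _ _)) ?_
      simp [Nat.card_Ico]
    have hN0 : (0:ℝ) < N := by exact_mod_cast hN
    have hs0 : (0:ℝ) < ((s^2 : ℕ) : ℝ) := by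
      have : 1 ≤ s^2 := Nat.one_le_iff_ne_zero.mpr (by positivity)
      exact_mod_cast Nat.lt_of_lt_of_le Nat.zero_lt_one this
    have hsleR : ((s^2 : ℕ) : ℝ) ≤ (N : ℝ) := by exact_mod_cast hsle
    have step1 : ‖F N x / N‖ = ‖F N x‖ / (N:ℝ) := by
      rw [norm_div, Complex.norm_natCast]
    rw [step1]
    have step2 : ‖F N x‖ ≤ ‖F (s^2) x‖ + ((N - s^2 : ℕ) : ℝ) := by
      calc ‖F N x‖ = ‖F (s^2) x + (F N x - F (s^2) x)‖ := by ring_nf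
        _ ≤ ‖F (s^2) x‖ + ‖F N x - F (s^2) x‖ := norm_add_le _ _
        _ ≤ _ := by linarith
    calc ‖F N x‖ / (N:ℝ) ≤ (‖F (s^2) x‖ + ((N - s^2 : ℕ) : ℝ)) / (N:ℝ) := by
          gcongr
      _ = ‖F (s^2) x‖ / (N:ℝ) + ((N - s^2 : ℕ) : ℝ) / (N:ℝ) := add_div _ _ _
      _ ≤ ‖F (s^2) x‖ / ((s^2:ℕ):ℝ) + (2*(s:ℝ)) / ((s^2:ℕ):ℝ) := by
          have hA : ‖F (s^2) x‖ / (N:ℝ) ≤ ‖F (s^2) x‖ / ((s^2:ℕ):ℝ) := by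
            gcongr
          have hB : ((N - s^2 : ℕ) : ℝ) / (N:ℝ) ≤ (2*(s:ℝ)) / ((s^2:ℕ):ℝ) := by
            apply div_le_div₀ (by positivity) _ hs0 hsleR
            exact_mod_cast h2s
          linarith
  have h2 : Tendsto (fun s : ℕ => 2*(s:ℝ)/((s^2:ℕ):ℝ)) atTop (nhds 0) := by
    apply Tendsto.congr' _ (tendsto_const_div_atTop_nhds_zero_nat 2)
    filter_upwards [eventually_ge_atTop 1] with s hs
    have hs0 : (s:ℝ) ≠ 0 := by positivity
    push_cast
    field_simp
  have hup : Tendsto (fun m : ℕ => ‖F (m^2) x‖ / ((m^2:ℕ):ℝ) + 2*(m:ℝ)/((m^2:ℕ):ℝ))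
      atTop (nhds 0) := by simpa using hx'.add h2
  have hcomp := hup.comp tendsto_nat_sqrt_atTop
  apply squeeze_zero' (Eventually.of_forall fun N => norm_nonneg _) _ hcomp
  filter_upwards [eventually_ge_atTop 1] with N hN
  exact hbound N hN

noncomputable def birk (u : ℕ → ℝ) (g : AddCircle (1:ℝ) → ℂ) (N : ℕ) : ℂ :=
  (∑ j ∈ Finset.range N, g (u j : AddCircle (1:ℝ))) / N

lemma haar_integrable (g : C(AddCircle (1:ℝ), ℂ)) :
    Integrable g AddCircle.haarAddCircle :=
  g.continuous.integrable_of_hasCompactSupport (HasCompactSupport.of_compactSpace _)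

lemma birk_tendsto_of_cont (u : ℕ → ℝ)
    (hu : ∀ h : ℤ, h ≠ 0 → Tendsto (birk u (fourier h)) atTop (nhds 0))
    (g : C(AddCircle (1:ℝ), ℂ)) :
    Tendsto (birk u g) atTop (nhds (∫ z, g z ∂AddCircle.haarAddCircle)) := by
  -- step 1: span case
  have span_case : ∀ P ∈ Submodule.span ℂ (Set.range (@fourier 1)),
      Tendsto (birk u P) atTop (nhds (∫ z, P z ∂AddCircle.haarAddCircle)) := by
    intro P hP
    induction hP using Submodule.span_induction with
    | mem P hmem =>
      obtain ⟨h, rfl⟩ := hmem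
      by_cases hh : h = 0
      · subst hh
        have hint : ∫ z, (fourier 0 : C(AddCircle (1:ℝ), ℂ)) z ∂AddCircle.haarAddCircle = 1 := by
          have : ∀ z : AddCircle (1:ℝ), (fourier 0 : C(AddCircle (1:ℝ), ℂ)) z = 1 :=
            fun z => fourier_zero
          simp_rw [this]
          simp
        rw [hint]
        have : ∀ᶠ N : ℕ in atTop, birk u (fourier 0) N = 1 := by
          filter_upwards [eventually_ge_atTop 1] with N hN
          unfold birk
          have : ∀ j ∈ Finset.range N, (fourier 0 : C(AddCircle (1:ℝ), ℂ)) ((u j : ℝ) : AddCircle (1:ℝ)) = 1 :=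
            fun j _ => fourier_zero
          rw [Finset.sum_congr rfl this]
          simp
          exact_mod_cast Nat.one_le_iff_ne_zero.mp hN
        exact Tendsto.congr' (this.mono fun N h => h.symm) tendsto_const_nhds
      · rw [show (⇑(fourier h) : AddCircle (1:ℝ) → ℂ) = ⇑(fourier h) from rfl]
        rw [integral_fourier_eq_zero hh]
        exact hu h hh
    | zero =>
      have hb : ∀ N, birk u (⇑(0 : C(AddCircle (1:ℝ), ℂ))) N = 0 := by
        intro N; unfold birk; simp
      have hi : ∫ z, (0 : C(AddCircle (1:ℝ), ℂ)) z ∂AddCircle.haarAddCircle = 0 := by simp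
      rw [hi]
      exact Tendsto.congr (fun N => (hb N).symm) tendsto_const_nhds
    | add P Q hPmem hQmem hP hQ =>
      have hb : ∀ N, birk u (⇑(P + Q)) N = birk u (⇑P) N + birk u (⇑Q) N := by
        intro N; unfold birk
        simp only [ContinuousMap.add_apply, Finset.sum_add_distrib]
        rw [add_div]
      have hi : ∫ z, (P + Q) z ∂AddCircle.haarAddCircle
          = (∫ z, P z ∂AddCircle.haarAddCircle) + ∫ z, Q z ∂AddCircle.haarAddCircle := by
        simp only [ContinuousMap.add_apply]
        exact integral_add (haar_integrable P) (haar_integrable Q)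
      rw [hi]
      exact Tendsto.congr (fun N => (hb N).symm) (hP.add hQ)
    | smul c P hPmem hP =>
      have hb : ∀ N, birk u (⇑(c • P)) N = c * birk u (⇑P) N := by
        intro N; unfold birk
        simp only [ContinuousMap.smul_apply, smul_eq_mul, ← Finset.mul_sum]
        rw [mul_div_assoc]
      have hi : ∫ z, (c • P) z ∂AddCircle.haarAddCircle
          = c * ∫ z, P z ∂AddCircle.haarAddCircle := by
        simp only [ContinuousMap.smul_apply, smul_eq_mul]
        rw [← integral_const_mul]
      rw [hi]
      exact Tendsto.congr (fun N => (hb N).symm) (hP.const_mul c)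
  -- step 2: density
  rw [Metric.tendsto_atTop]
  intro ε hε
  have hg : (g : C(AddCircle (1:ℝ), ℂ)) ∈
      closure ((Submodule.span ℂ (Set.range (@fourier 1)) : Submodule ℂ C(AddCircle (1:ℝ), ℂ)) : Set C(AddCircle (1:ℝ), ℂ)) := by
    have := span_fourier_closure_eq_top (T := 1)
    rw [← Submodule.topologicalClosure_coe]
    rw [this]
    trivial
  obtain ⟨P, hPmem, hPdist⟩ := Metric.mem_closure_iff.mp hg (ε/3) (by positivity)
  have hPnorm : ‖g - P‖ < ε/3 := by rwa [← dist_eq_norm]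
  have hPpt : ∀ z, ‖g z - P z‖ ≤ ‖g - P‖ := fun z => by
    have := ContinuousMap.norm_coe_le_norm (g - P) z
    simpa using this
  have hPlim := span_case P hPmem
  rw [Metric.tendsto_atTop] at hPlim
  obtain ⟨M, hM⟩ := hPlim (ε/3) (by positivity)
  refine ⟨max M 1, fun N hN => ?_⟩
  have hN1 : 1 ≤ N := le_trans (le_max_right _ _) hN
  have hNM : M ≤ N := le_trans (le_max_left _ _) hN
  have hNpos : (0:ℝ) < N := by exact_mod_cast hN1
  have key1 : dist (birk u g N) (birk u (⇑P) N) ≤ ε/3 := by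
    rw [dist_eq_norm]
    unfold birk
    rw [div_sub_div_same, ← Finset.sum_sub_distrib, norm_div]
    rw [Complex.norm_natCast]
    rw [div_le_iff₀ hNpos]
    refine le_trans (norm_sum_le _ _) ?_
    refine le_trans (Finset.sum_le_card_nsmul _ _ (ε/3) fun j _ => ?_) ?_
    · exact le_of_lt (lt_of_le_of_lt (hPpt _) hPnorm)
    · simp [Finset.card_range]
      rw [mul_comm]
  have key2 : dist (∫ z, P z ∂AddCircle.haarAddCircle) (∫ z, g z ∂AddCircle.haarAddCircle) ≤ ε/3 := by
    rw [dist_eq_norm, ← integral_sub (haar_integrable P) (haar_integrable g)]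
    refine le_trans (norm_integral_le_of_norm_le_const (C := ε/3) ?_) (by simp)
    filter_upwards with z
    have h1 : ‖P z - g z‖ = ‖g z - P z‖ := norm_sub_rev _ _
    rw [h1]
    exact le_of_lt (lt_of_le_of_lt (hPpt z) hPnorm)
  calc dist (birk u (⇑g) N) (∫ z, g z ∂AddCircle.haarAddCircle)
      ≤ dist (birk u (⇑g) N) (birk u (⇑P) N) + dist (birk u (⇑P) N) (∫ z, P z ∂AddCircle.haarAddCircle)
        + dist (∫ z, P z ∂AddCircle.haarAddCircle) (∫ z, g z ∂AddCircle.haarAddCircle) := dist_triangle4 _ _ _ _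
    _ < ε/3 + ε/3 + ε/3 := by
        have := hM N hNM
        linarith [key1, key2]
    _ = ε := by ring

lemma my_integral_ofReal' {α : Type*} [MeasurableSpace α] {μ : Measure α} {f : α → ℝ} :
    ∫ x, ((f x : ℝ) : ℂ) ∂μ = ((∫ x, f x ∂μ : ℝ) : ℂ) := integral_ofReal

lemma birkReal (u : ℕ → ℝ)
    (hu : ∀ h : ℤ, h ≠ 0 → Tendsto (birk u (fourier h)) atTop (nhds 0))
    (f : ℝ → ℝ) (hf : Continuous f) (hper : Function.Periodic f 1) (c : ℝ) :
    Tendsto (fun N : ℕ => (∑ j ∈ Finset.range N, f (u j)) / N) atTop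
      (nhds (∫ x in Ioc c (c+1), f x)) := by
  set gf : AddCircle (1:ℝ) → ℝ := hper.lift with hgf
  have hgfc : Continuous gf := continuous_coinduced_dom.mpr hf
  set gC : C(AddCircle (1:ℝ), ℂ) := ⟨fun z => ((gf z : ℝ) : ℂ), by continuity⟩ with hgC
  have h1 := birk_tendsto_of_cont u hu gC
  have h2 : ∫ z, gC z ∂AddCircle.haarAddCircle = ((∫ x in Ioc c (c+1), f x : ℝ) : ℂ) := by
    have e1 : ∫ z, gC z ∂AddCircle.haarAddCircle = ((∫ z, gf z ∂AddCircle.haarAddCircle : ℝ) : ℂ) :=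
      my_integral_ofReal'
    rw [e1]
    congr 1
    rw [← volume_addCircle_one, ← AddCircle.integral_preimage 1 c gf]
    apply setIntegral_congr_fun measurableSet_Ioc
    intro x _
    exact hper.lift_coe x
  rw [h2] at h1
  have h3 := (Complex.continuous_re.tendsto _).comp h1
  simp only [Function.comp_def, Complex.ofReal_re] at h3
  apply h3.congr
  intro N
  have : birk u gC N = (((∑ j ∈ Finset.range N, f (u j)) / N : ℝ) : ℂ) := by
    unfold birk
    have : ∀ j, gC ((u j : ℝ) : AddCircle (1:ℝ)) = ((f (u j) : ℝ) : ℂ) := by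
      intro j
      simp only [hgC, ContinuousMap.coe_mk]
      rw [hgf, hper.lift_coe]
    rw [Finset.sum_congr rfl fun j _ => this j]
    push_cast
    ring
  rw [this, Complex.ofReal_re]

def perSet (p q : ℝ) : Set ℝ := ⋃ k : ℤ, Icc (p + k) (q + k)

noncomputable def bump (p q δ : ℝ) (t : ℝ) : ℝ := max 0 (1 - infDist t (perSet p q) / δ)

lemma perSet_nonempty {p q : ℝ} (h : p ≤ q) : (perSet p q).Nonempty :=
  ⟨p, mem_iUnion.2 ⟨0, by simp [h]⟩⟩

lemma perSet_mem_iff {p q t : ℝ} : t ∈ perSet p q ↔ ∃ k : ℤ, p + k ≤ t ∧ t ≤ q + k := by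
  simp [perSet, mem_iUnion, mem_Icc]

lemma perSet_add_one {p q : ℝ} : (fun s => s + 1) '' perSet p q = perSet p q := by
  ext t
  constructor
  · rintro ⟨s, hs, rfl⟩
    obtain ⟨k, hk1, hk2⟩ := perSet_mem_iff.mp hs
    refine perSet_mem_iff.mpr ⟨k + 1, ?_, ?_⟩ <;> push_cast <;> linarith
  · intro ht
    obtain ⟨k, hk1, hk2⟩ := perSet_mem_iff.mp ht
    refine ⟨t - 1, perSet_mem_iff.mpr ⟨k - 1, ?_, ?_⟩, by ring⟩ <;> push_cast <;> linarith

lemma bump_periodic (p q δ : ℝ) : Function.Periodic (bump p q δ) 1 := by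
  intro t
  unfold bump
  congr 2
  have : infDist (t + 1) (perSet p q) = infDist t (perSet p q) := by
    conv_lhs => rw [← perSet_add_one (p := p) (q := q)]
    exact infDist_image (Isometry.of_dist_eq fun x y => by simp [Real.dist_eq])
  rw [this]

lemma bump_continuous (p q δ : ℝ) : Continuous (bump p q δ) :=
  continuous_const.max (continuous_const.sub ((continuous_infDist_pt _).div_const _))

lemma bump_nonneg (p q δ t : ℝ) : 0 ≤ bump p q δ t := le_max_left _ _

lemma bump_le_one (p q δ : ℝ) (hδ : 0 < δ) (t : ℝ) : bump p q δ t ≤ 1 := by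
  apply max_le (by norm_num)
  have h1 : 0 ≤ infDist t (perSet p q) := infDist_nonneg
  have : 0 ≤ infDist t (perSet p q) / δ := by positivity
  linarith

lemma bump_eq_one {p q δ t : ℝ} (ht : t ∈ perSet p q) : bump p q δ t = 1 := by
  unfold bump
  rw [infDist_zero_of_mem ht]
  norm_num

lemma bump_eq_zero {p q δ t : ℝ} (hpq : p ≤ q) (hδ : 0 < δ)
    (ht : ∀ s ∈ perSet p q, δ ≤ dist t s) : bump p q δ t = 0 := by
  have h1 : δ ≤ infDist t (perSet p q) := by
    rw [infDist_eq_iInf]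
    have : Nonempty (perSet p q) := (perSet_nonempty hpq).to_subtype
    exact le_ciInf fun y => ht y y.2
  unfold bump
  apply max_eq_left
  have : 1 ≤ infDist t (perSet p q) / δ := by
    rw [le_div_iff₀ hδ]; linarith
  linarith

lemma fract_mem_perSet {p q t : ℝ} (h : Int.fract t ∈ Icc p q) : t ∈ perSet p q := by
  obtain ⟨h1, h2⟩ := h
  have hf : t = Int.fract t + ⌊t⌋ := by rw [Int.fract]; ring
  refine perSet_mem_iff.mpr ⟨⌊t⌋, by linarith, by linarith⟩

lemma unifDist_of_weyl (u : ℕ → ℝ)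
    (hu : ∀ h : ℤ, h ≠ 0 → Tendsto (birk u (fourier h)) atTop (nhds 0)) :
    UnifDistModOne u := by
  intro a b ha hab hb
  rw [Metric.tendsto_atTop]
  intro ε hε
  set δ := ε/4 with hδdef
  have hδ : 0 < δ := by positivity
  set cnt : ℕ → ℝ := fun N =>
    (((Finset.range N).filter (fun j => Int.fract (u j) ∈ Set.Icc a b)).card : ℝ) with hcnt
  -- UPPER BOUND
  have upper : ∀ᶠ N in atTop, cnt N / N ≤ b - a + 3*δ := by
    by_cases hcase : b + δ ≤ a - δ + 1
    · have hlim := birkReal u hu (bump a b δ) (bump_continuous a b δ) (bump_periodic a b δ) (a - δ)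
      have hAU : ∫ x in Ioc (a-δ) ((a-δ)+1), bump a b δ x ≤ b - a + 2*δ := by
        have hsplit : ∫ x in Ioc (a-δ) ((a-δ)+1), bump a b δ x
            = (∫ x in (a-δ)..(b+δ), bump a b δ x) + ∫ x in (b+δ)..((a-δ)+1), bump a b δ x := by
          rw [← intervalIntegral.integral_of_le (by linarith)]
          rw [intervalIntegral.integral_add_adjacent_intervals] <;>
            exact (bump_continuous a b δ).intervalIntegrable _ _
        have h2 : (∫ x in (b+δ)..((a-δ)+1), bump a b δ x) = 0 := by
          rw [intervalIntegral.integral_congr (g := fun _ => 0) ?_, intervalIntegral.integral_zero]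
          intro t ht
          rw [uIcc_of_le (by linarith)] at ht
          obtain ⟨ht1, ht2⟩ := ht
          apply bump_eq_zero hab hδ
          intro s hs
          obtain ⟨k, hk1, hk2⟩ := perSet_mem_iff.mp hs
          rw [Real.dist_eq]
          rcases le_or_gt (k:ℝ) 0 with hk | hk
          · rw [abs_of_nonneg (by linarith)]; linarith
          · have hk1' : (1:ℝ) ≤ k := by exact_mod_cast hk
            rw [abs_of_nonpos (by linarith)]; linarith
        have h1 : (∫ x in (a-δ)..(b+δ), bump a b δ x) ≤ b - a + 2*δ := by
          have := intervalIntegral.integral_mono_on (μ := volume) (f := bump a b δ)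
            (g := fun _ => (1:ℝ))
            (by linarith : a - δ ≤ b + δ)
            ((bump_continuous a b δ).intervalIntegrable _ _)
            (intervalIntegrable_const)
            (fun t _ => bump_le_one a b δ hδ t)
          rw [intervalIntegral.integral_const] at this
          simpa using le_trans this (by simp; linarith)
        rw [hsplit, h2, add_zero]; exact h1
      have hev := hlim.eventually_lt_const (by linarith : ∫ x in Ioc (a-δ) ((a-δ)+1), bump a b δ x < b - a + 3*δ)
      filter_upwards [hev, eventually_ge_atTop 1] with N hN hN1
      have hcount : cnt N ≤ ∑ j ∈ Finset.range N, bump a b δ (u j) := by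
        rw [hcnt]
        simp only
        rw [Finset.card_eq_sum_ones]
        push_cast
        calc (∑ _j ∈ (Finset.range N).filter (fun j => Int.fract (u j) ∈ Set.Icc a b), (1:ℝ))
            = ∑ j ∈ (Finset.range N).filter (fun j => Int.fract (u j) ∈ Set.Icc a b), bump a b δ (u j) := by
              apply Finset.sum_congr rfl
              intro j hj
              exact (bump_eq_one (fract_mem_perSet (Finset.mem_filter.mp hj).2)).symm
          _ ≤ ∑ j ∈ Finset.range N, bump a b δ (u j) :=
              Finset.sum_le_sum_of_subset_of_nonneg (Finset.filter_subset _ _)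
                (fun j _ _ => bump_nonneg a b δ (u j))
      have hNpos : (0:ℝ) < N := by exact_mod_cast hN1
      calc cnt N / N ≤ (∑ j ∈ Finset.range N, bump a b δ (u j)) / N := by
            gcongr
        _ ≤ b - a + 3*δ := le_of_lt hN
    · filter_upwards [eventually_ge_atTop 1] with N hN1
      have hNpos : (0:ℝ) < N := by exact_mod_cast hN1
      have : cnt N ≤ N := by
        rw [hcnt]
        exact_mod_cast Nat.cast_le.mpr ((Finset.card_filter_le _ _).trans (Finset.card_range N).le)
      have h1 : cnt N / N ≤ 1 := by
        rw [div_le_one hNpos]; exact this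
      linarith [h1]
  -- LOWER BOUND
  have lower : ∀ᶠ N in atTop, b - a - 3*δ ≤ cnt N / N := by
    by_cases hcase : a + δ ≤ b - δ
    · have hlim := birkReal u hu (bump (a+δ) (b-δ) δ) (bump_continuous _ _ δ) (bump_periodic _ _ δ) 0
      have hAL : b - a - 2*δ ≤ ∫ x in Ioc (0:ℝ) (0+1), bump (a+δ) (b-δ) δ x := by
        have hsub : Ioc (a+δ) (b-δ) ⊆ Ioc (0:ℝ) (0+1) := by
          apply Ioc_subset_Ioc <;> linarith
        have h1 : ∫ x in Ioc (a+δ) (b-δ), bump (a+δ) (b-δ) δ x = b - a - 2*δ := by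
          rw [setIntegral_congr_fun measurableSet_Ioc (g := fun _ => (1:ℝ))]
          · simp [Real.volume_Ioc]
            rw [max_eq_left (by linarith)]
            ring
          · intro t ht
            exact bump_eq_one (perSet_mem_iff.mpr ⟨0, by push_cast; simpa using ⟨le_of_lt ht.1, ht.2⟩⟩)
        rw [← h1]
        apply setIntegral_mono_set
        · exact (bump_continuous _ _ δ).integrableOn_Ioc
        · filter_upwards with t using bump_nonneg _ _ δ t
        · exact HasSubset.Subset.eventuallyLE hsub
      have hev := hlim.eventually_const_lt (by linarith : b - a - 3*δ < ∫ x in Ioc (0:ℝ) (0+1), bump (a+δ) (b-δ) δ x)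
      filter_upwards [hev, eventually_ge_atTop 1] with N hN hN1
      have hNpos : (0:ℝ) < N := by exact_mod_cast hN1
      have hcount : ∑ j ∈ Finset.range N, bump (a+δ) (b-δ) δ (u j) ≤ cnt N := by
        rw [hcnt]
        simp only
        rw [← Finset.sum_filter_add_sum_filter_not (Finset.range N)
          (fun j => Int.fract (u j) ∈ Set.Icc a b) (fun j => bump (a+δ) (b-δ) δ (u j))]
        have hzero : ∑ j ∈ (Finset.range N).filter (fun j => ¬ Int.fract (u j) ∈ Set.Icc a b),
            bump (a+δ) (b-δ) δ (u j) = 0 := by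
          apply Finset.sum_eq_zero
          intro j hj
          have hnot := (Finset.mem_filter.mp hj).2
          apply bump_eq_zero hcase hδ
          intro s hs
          obtain ⟨k, hk1, hk2⟩ := perSet_mem_iff.mp hs
          rw [Real.dist_eq]
          set t := u j
          have hfr0 : 0 ≤ Int.fract t := Int.fract_nonneg t
          have hfr1 : Int.fract t < 1 := Int.fract_lt_one t
          have htf : t = Int.fract t + ⌊t⌋ := by rw [Int.fract]; ring
          have hnot' : Int.fract t < a ∨ b < Int.fract t := by
            by_contra hcon
            push_neg at hcon
            exact hnot (Set.mem_Icc.mpr ⟨hcon.1, hcon.2⟩)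
          rcases lt_trichotomy (k:ℝ) (⌊t⌋:ℝ) with hk0 | hk0 | hk0
          · have : (k:ℝ) ≤ (⌊t⌋:ℝ) - 1 := by
              have h5 : k < ⌊t⌋ := by exact_mod_cast hk0
              have h6 : k ≤ ⌊t⌋ - 1 := by omega
              push_cast [← @Int.cast_le ℝ] at h6 ⊢
              linarith
            rw [abs_of_nonneg (by linarith)]; linarith
          · rcases hnot' with h | h
            · rw [abs_of_nonpos (by linarith)]; linarith
            · rw [abs_of_nonneg (by linarith)]; linarith
          · have : (⌊t⌋:ℝ) + 1 ≤ (k:ℝ) := by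
              have h5 : ⌊t⌋ < k := by exact_mod_cast hk0
              have h6 : ⌊t⌋ + 1 ≤ k := by omega
              push_cast [← @Int.cast_le ℝ] at h6 ⊢
              linarith
            rw [abs_of_nonpos (by linarith)]; linarith
        rw [hzero, add_zero]
        push_cast
        rw [Finset.card_eq_sum_ones]
        push_cast
        apply Finset.sum_le_sum
        intro j _
        exact bump_le_one _ _ δ hδ _
      calc b - a - 3*δ ≤ (∑ j ∈ Finset.range N, bump (a+δ) (b-δ) δ (u j)) / N := le_of_lt hN
        _ ≤ cnt N / N := by gcongr
    · filter_upwards [eventually_ge_atTop 1] with N hN1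
      have hNpos : (0:ℝ) < N := by exact_mod_cast hN1
      have h0 : 0 ≤ cnt N / N := by positivity
      push_neg at hcase
      linarith
  have final : ∀ᶠ N in atTop, dist (cnt N / N) (b - a) < ε := by
    filter_upwards [upper, lower] with N h1 h2
    rw [Real.dist_eq, abs_lt]
    rw [hδdef] at h1 h2
    constructor <;> linarith
  exact eventually_atTop.mp final


lemma eC_int_mul (h m : ℤ) (x : ℝ) : eC h ((m : ℝ) * x) = eC (h * m) x := by
  unfold eC
  congr 1
  push_cast
  ring

/-- Weyl: for any sequence of pairwise distinct integers `a`, for Lebesgue-almost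
every real `x`, the sequence `(a n * x)` is uniformly distributed modulo one. -/
theorem weyl_theorem (a : ℕ → ℤ) (ha : Function.Injective a) :
    ∀ᵐ x ∂(volume : Measure ℝ), UnifDistModOne (fun n => (a n : ℝ) * x) := by
  have key : ∀ᵐ x ∂(volume : Measure ℝ), ∀ h : ℤ, h ≠ 0 →
      Tendsto (fun N : ℕ => (∑ j ∈ Finset.range N, eC (h * a j) x) / N) atTop (nhds 0) := by
    rw [ae_all_iff]
    intro h
    by_cases hh : h = 0
    · filter_upwards with x hcon
      exact absurd hh hcon
    · have hc : Function.Injective (fun j => h * a j) := fun j j' hjj => by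
        have : a j = a j' := by
          simp only [mul_eq_mul_left_iff] at hjj
          rcases hjj with hjj | hjj
          · exact hjj
          · exact absurd hjj hh
        exact ha this
      filter_upwards [ae_tendsto_sum_eC _ hc] with x hx _
      exact hx
  filter_upwards [key] with x hx
  apply unifDist_of_weyl
  intro h hh
  have heq : ∀ N : ℕ, birk (fun n => (a n : ℝ) * x) (fourier h) N
      = (∑ j ∈ Finset.range N, eC (h * a j) x) / N := by
    intro N
    unfold birk
    congr 1
    apply Finset.sum_congr rfl
    intro j _
    rw [← eC_eq_fourier, eC_int_mul]
  exact Tendsto.congr (fun N => (heq N).symm) (hx h hh)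
end

section
/- Let b > 1 be an integer, let x ∈ [0,1], and let (a_n)_{n∈ℕ} be a sequence of pairwise distinct nonnegative integers such that the sequence (b^{a_n} x)_{n∈ℕ} is uniformly distributed modulo one. Then for every k ≥ 1 and every string w of k digits from {0,…,b−1}, the limiting frequency with which w occurs in the base-b expansion of x starting at the positions a_0+1, a_1+1, a_2+1, … equals b^{-k}; that is, lim_{N→∞} (1/N)·|{n < N : the digits of the base-b expansion of x at positions a_n+1, …, a_n+k form the string w}| = b^{-k}. -/
open MeasureTheory Filter
open scoped Classical

/-- The digit at position `p` (positions indexed from 1) of the base-`b` expansion of `x`: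
`⌊b^p x⌋ mod b`. -/
noncomputable def baseDigit (b : ℕ) (x : ℝ) (p : ℕ) : ℤ := ⌊(b : ℝ) ^ p * x⌋ % b

lemma mod_helper (b m d : ℤ) (h : b ∣ m) : (m + d) % b = d % b := by
  obtain ⟨c, rfl⟩ := h
  rw [add_comm, mul_comm]
  exact Int.add_mul_emod_self_right _ _ _

lemma sum_succ_eq (b : ℤ) (w : ℕ → ℤ) (k : ℕ) :
    ∑ i ∈ Finset.range (k+1), w i * b ^ (k + 1 - 1 - i)
      = b * (∑ i ∈ Finset.range k, w i * b ^ (k - 1 - i)) + w k := by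
  rw [Finset.sum_range_succ]
  simp only [Nat.add_sub_cancel, Nat.sub_self, pow_zero, mul_one]
  congr 1
  rw [Finset.mul_sum]
  apply Finset.sum_congr rfl
  intro i hi
  have hik : i < k := Finset.mem_range.mp hi
  have h2 : k - i = (k - 1 - i) + 1 := by omega
  rw [h2, pow_succ]
  ring

lemma digit_fract_aux (b : ℕ) (hb : 1 < b) (z : ℝ) (j : ℕ) (hj : 1 ≤ j) :
    ⌊(b : ℝ) ^ j * z⌋ % b = ⌊(b : ℝ) ^ j * Int.fract z⌋ % b := by
  have h1 : (b : ℝ) ^ j * z = (((b : ℤ) ^ j * ⌊z⌋ : ℤ) : ℝ) + (b : ℝ) ^ j * Int.fract z := by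
    rw [Int.fract]
    push_cast
    ring
  rw [h1, add_comm, Int.floor_add_intCast]
  rw [add_comm]
  exact mod_helper _ _ _ (Dvd.dvd.mul_right (dvd_pow_self _ (by omega)) _)

lemma floor_mul_base (b : ℕ) (hb : 1 < b) (z : ℝ) :
    ⌊(b : ℝ) * z⌋ = b * ⌊z⌋ + ⌊(b : ℝ) * Int.fract z⌋ ∧
      0 ≤ ⌊(b : ℝ) * Int.fract z⌋ ∧ ⌊(b : ℝ) * Int.fract z⌋ < b := by
  have hb0 : (0:ℝ) < b := by positivity
  refine ⟨?_, ?_, ?_⟩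
  · have h1 : (b : ℝ) * z = ((b * ⌊z⌋ : ℤ) : ℝ) + (b : ℝ) * Int.fract z := by
      rw [Int.fract]; push_cast; ring
    rw [h1, add_comm, Int.floor_add_intCast]; ring
  · exact Int.floor_nonneg.mpr (mul_nonneg (le_of_lt hb0) (Int.fract_nonneg z))
  · have h2 : (b : ℝ) * Int.fract z < b := by
      have := Int.fract_lt_one z
      nlinarith
    exact Int.floor_lt.mpr (by exact_mod_cast h2)

lemma digits_iff_floor (b : ℕ) (hb : 1 < b) (y : ℝ) (hy : y ∈ Set.Ico (0:ℝ) 1)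
    (w : ℕ → ℤ) :
    ∀ k : ℕ, (∀ i < k, 0 ≤ w i ∧ w i < b) →
    ((∀ i < k, ⌊(b : ℝ) ^ (i + 1) * y⌋ % b = w i) ↔
      ⌊(b : ℝ) ^ k * y⌋ = ∑ i ∈ Finset.range k, w i * (b : ℤ) ^ (k - 1 - i)) := by
  intro k
  induction k with
  | zero =>
    intro _
    simp only [Finset.range_zero, Finset.sum_empty, pow_zero, one_mul]
    constructor
    · intro _; exact Int.floor_eq_zero_iff.mpr (by simpa using hy)
    · intro _ i hi; omega
  | succ k ih =>
    intro hw
    have hwk := hw k (by omega)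
    have ihk := ih (fun i hi => hw i (by omega))
    have hsum := sum_succ_eq (b : ℤ) w k
    obtain ⟨hfl, hr0, hrb⟩ := floor_mul_base b hb ((b : ℝ) ^ k * y)
    have hpow : (b : ℝ) ^ (k + 1) * y = (b : ℝ) * ((b : ℝ) ^ k * y) := by ring
    set F := ⌊(b : ℝ) ^ k * y⌋ with hF
    set r := ⌊(b : ℝ) * Int.fract ((b : ℝ) ^ k * y)⌋ with hr
    have hfl1 : ⌊(b : ℝ) ^ (k + 1) * y⌋ = b * F + r := by rw [hpow]; exact hfl
    have hdig : ⌊(b : ℝ) ^ (k + 1) * y⌋ % b = r := by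
      rw [hfl1, mod_helper _ _ _ (Dvd.intro F rfl)]
      exact Int.emod_eq_of_lt hr0 hrb
    constructor
    · intro h
      have h1 : F = ∑ i ∈ Finset.range k, w i * (b : ℤ) ^ (k - 1 - i) :=
        ihk.mp (fun i hi => h i (by omega))
      have h2 : r = w k := by rw [← hdig]; exact h k (by omega)
      rw [hfl1, hsum, h1, h2]
    · intro h
      have heq : b * F + r = b * (∑ i ∈ Finset.range k, w i * (b : ℤ) ^ (k - 1 - i)) + w k := by
        rw [← hfl1, ← hsum, h]
      have hrw : r = w k := by
        have e1 : (b * F + r) % b = r := by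
          rw [mod_helper _ _ _ (Dvd.intro F rfl)]; exact Int.emod_eq_of_lt hr0 hrb
        have e2 : ((b:ℤ) * (∑ i ∈ Finset.range k, w i * (b : ℤ) ^ (k - 1 - i)) + w k) % b
            = w k := by
          rw [mod_helper _ _ _ (Dvd.intro _ rfl)]; exact Int.emod_eq_of_lt hwk.1 hwk.2
        rw [← e1, heq, e2]
      have hF2 : F = ∑ i ∈ Finset.range k, w i * (b : ℤ) ^ (k - 1 - i) := by
        have hb0 : (b : ℤ) ≠ 0 := by exact_mod_cast (by omega : b ≠ 0)
        have h3 : b * F = b * (∑ i ∈ Finset.range k, w i * (b : ℤ) ^ (k - 1 - i)) := by omega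
        exact mul_left_cancel₀ hb0 h3
      intro i hi
      rcases Nat.lt_succ_iff_lt_or_eq.mp hi with hik | hik
      · exact ihk.mpr hF2 i hik
      · subst hik; rw [hdig, hrw]

lemma M_bounds (b : ℕ) (hb : 1 < b) (w : ℕ → ℤ) :
    ∀ k : ℕ, (∀ i < k, 0 ≤ w i ∧ w i < b) →
      0 ≤ ∑ i ∈ Finset.range k, w i * (b : ℤ) ^ (k - 1 - i) ∧
      ∑ i ∈ Finset.range k, w i * (b : ℤ) ^ (k - 1 - i) < (b : ℤ) ^ k := by
  intro k
  induction k with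
  | zero => intro _; simp
  | succ k ih =>
    intro hw
    obtain ⟨h0, h1⟩ := ih (fun i hi => hw i (by omega))
    have hwk := hw k (by omega)
    rw [sum_succ_eq]
    have hbZ : (1 : ℤ) < b := by exact_mod_cast hb
    constructor
    · have : (0:ℤ) ≤ b * ∑ i ∈ Finset.range k, w i * (b : ℤ) ^ (k - 1 - i) :=
        mul_nonneg (by omega) h0
      omega
    · have h2 : (∑ i ∈ Finset.range k, w i * (b : ℤ) ^ (k - 1 - i)) ≤ (b:ℤ)^k - 1 := by omega
      have h3 := mul_le_mul_of_nonneg_left h2 (by omega : (0:ℤ) ≤ b)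
      have h4 : (b:ℤ)^(k+1) = b * (b:ℤ)^k := by rw [pow_succ]; ring
      nlinarith

/-- Let `b > 1`, `x ∈ [0,1]`, and let `(a n)` be a sequence of pairwise distinct
nonnegative integers such that `(b^{a n} x)` is uniformly distributed modulo one.  Then
for every `k ≥ 1` and every block `w` of `k` digits from `{0, …, b-1}`, the limiting
frequency with which `w` occurs in the base-`b` expansion of `x` starting at positions
`a n + 1` equals `b^{-k}`. -/
theorem block_frequency_along_sequence (b : ℕ) (hb : 1 < b) (x : ℝ)
    (hx : x ∈ Set.Icc (0:ℝ) 1) (a : ℕ → ℕ) (ha : Function.Injective a)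
    (hud : UnifDistModOne (fun n => (b : ℝ) ^ (a n) * x)) :
    ∀ k : ℕ, 1 ≤ k → ∀ w : Fin k → ℤ, (∀ i, 0 ≤ w i ∧ w i < b) →
      Filter.Tendsto
        (fun N : ℕ =>
          (((Finset.range N).filter
              (fun n => ∀ i : Fin k, baseDigit b x (a n + 1 + (i : ℕ)) = w i)).card : ℝ) / N)
        Filter.atTop (nhds (1 / (b : ℝ) ^ k)) := by
  intro k hk w hw
  have hbR : (1:ℝ) < b := by exact_mod_cast hb
  have hbpos : (0:ℝ) < (b:ℝ)^k := by positivity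
  set w' : ℕ → ℤ := fun i => if h : i < k then w ⟨i, h⟩ else 0 with hw'
  have hw'b : ∀ i < k, 0 ≤ w' i ∧ w' i < b := by
    intro i hi; simp only [hw', dif_pos hi]; exact hw ⟨i, hi⟩
  obtain ⟨hM0, hMk⟩ := M_bounds b hb w' k hw'b
  set M : ℤ := ∑ i ∈ Finset.range k, w' i * (b : ℤ) ^ (k - 1 - i) with hM
  set c : ℝ := (M : ℝ) / (b : ℝ) ^ k with hc
  set c' : ℝ := ((M : ℝ) + 1) / (b : ℝ) ^ k with hc'
  have hM0R : (0:ℝ) ≤ (M:ℝ) := Int.cast_nonneg hM0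
  have hMkR : (M:ℝ) + 1 ≤ (b:ℝ)^k := by
    have h' : (M:ℤ) + 1 ≤ (b:ℤ)^k := hMk
    have h'' := (Int.cast_le (R := ℝ)).mpr h'
    push_cast at h''
    exact h''
  have hc0 : 0 ≤ c := div_nonneg hM0R (le_of_lt hbpos)
  have hcc' : c < c' := by
    rw [hc, hc', div_lt_div_iff₀ hbpos hbpos]; nlinarith
  have hc'1 : c' ≤ 1 := by
    rw [hc', div_le_one hbpos]; exact hMkR
  -- key pointwise equivalence
  set u : ℕ → ℝ := fun n => (b : ℝ) ^ (a n) * x with hu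
  have key : ∀ n : ℕ,
      (∀ i : Fin k, baseDigit b x (a n + 1 + (i : ℕ)) = w i) ↔
        Int.fract (u n) ∈ Set.Ico c c' := by
    intro n
    set y : ℝ := Int.fract (u n) with hy
    have hy01 : y ∈ Set.Ico (0:ℝ) 1 := ⟨Int.fract_nonneg _, Int.fract_lt_one _⟩
    have hdig : ∀ i : Fin k, baseDigit b x (a n + 1 + (i : ℕ)) = ⌊(b:ℝ)^((i:ℕ)+1) * y⌋ % b := by
      intro i
      have h1 : (b:ℝ)^(a n + 1 + (i:ℕ)) * x = (b:ℝ)^((i:ℕ)+1) * ((b:ℝ)^(a n) * x) := by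
        rw [show a n + 1 + (i:ℕ) = ((i:ℕ)+1) + (a n) from by omega, pow_add]; ring
      rw [baseDigit, h1]
      exact digit_fract_aux b hb _ _ (by omega)
    have step1 : (∀ i : Fin k, baseDigit b x (a n + 1 + (i : ℕ)) = w i) ↔
        (∀ i < k, ⌊(b:ℝ)^(i+1) * y⌋ % b = w' i) := by
      constructor
      · intro h i hi
        simp only [hw', dif_pos hi]
        rw [← h ⟨i, hi⟩]; exact (hdig ⟨i, hi⟩).symm
      · intro h i
        rw [hdig i, h i i.isLt]
        simp only [hw', dif_pos i.isLt]
    rw [step1, digits_iff_floor b hb y hy01 w' k hw'b]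
    have hfloor : ⌊(b:ℝ)^k * y⌋ = M ↔ y ∈ Set.Ico c c' := by
      rw [Int.floor_eq_iff]
      constructor
      · rintro ⟨h1, h2⟩
        constructor
        · rw [hc, div_le_iff₀ hbpos]; linarith [h1]
        · rw [hc', lt_div_iff₀ hbpos]; push_cast at h2 ⊢; linarith [h2]
      · rintro ⟨h1, h2⟩
        rw [hc, div_le_iff₀ hbpos] at h1
        rw [hc', lt_div_iff₀ hbpos] at h2
        constructor
        · linarith
        · push_cast; linarith
    rw [← hM]
    exact hfloor
  -- rewrite the filter
  have hfilter : ∀ N : ℕ,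
      (Finset.range N).filter
          (fun n => ∀ i : Fin k, baseDigit b x (a n + 1 + (i : ℕ)) = w i)
        = (Finset.range N).filter (fun n => Int.fract (u n) ∈ Set.Ico c c') := by
    intro N
    apply Finset.filter_congr
    intro n _
    exact key n
  -- counting split: Icc = Ico ∪ {c'}
  have hsplit : ∀ N : ℕ,
      ((Finset.range N).filter (fun n => Int.fract (u n) ∈ Set.Icc c c')).card
        = ((Finset.range N).filter (fun n => Int.fract (u n) ∈ Set.Ico c c')).card
          + ((Finset.range N).filter (fun n => Int.fract (u n) ∈ Set.Icc c' c')).card := by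
    intro N
    rw [← Finset.card_union_of_disjoint]
    · congr 1
      rw [← Finset.filter_or]
      apply Finset.filter_congr
      intro n _
      simp only [Set.mem_Icc, Set.mem_Ico]
      constructor
      · rintro ⟨h1, h2⟩
        rcases lt_or_eq_of_le h2 with h | h
        · exact Or.inl ⟨h1, h⟩
        · exact Or.inr ⟨by rw [h], by rw [h]⟩
      · rintro (⟨h1, h2⟩ | ⟨h1, h2⟩)
        · exact ⟨h1, le_of_lt h2⟩
        · exact ⟨le_trans (le_of_lt hcc') h1, h2⟩
    · rw [Finset.disjoint_filter]
      intro n _ h2 h3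
      simp only [Set.mem_Ico] at h2
      simp only [Set.mem_Icc] at h3
      linarith [h2.2, h3.1]
  have h1 := hud c c' hc0 (le_of_lt hcc') hc'1
  have h2 := hud c' c' (le_trans hc0 (le_of_lt hcc')) le_rfl hc'1
  have h3 : Filter.Tendsto
      (fun N : ℕ =>
        (((Finset.range N).filter (fun n => Int.fract (u n) ∈ Set.Ico c c')).card : ℝ) / N)
      Filter.atTop (nhds ((c' - c) - (c' - c'))) := by
    have heq : (fun N : ℕ =>
        (((Finset.range N).filter (fun n => Int.fract (u n) ∈ Set.Ico c c')).card : ℝ) / N)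
        = (fun N : ℕ =>
          (((Finset.range N).filter (fun n => Int.fract (u n) ∈ Set.Icc c c')).card : ℝ) / N
          - (((Finset.range N).filter (fun n => Int.fract (u n) ∈ Set.Icc c' c')).card : ℝ) / N) := by
      funext N
      rw [div_sub_div_same, hsplit N]
      push_cast
      ring_nf
    rw [heq]
    exact Filter.Tendsto.sub h1 h2
  have hval : (c' - c) - (c' - c') = 1 / (b:ℝ)^k := by
    rw [hc, hc']
    field_simp
    ring
  rw [← hval]
  have heq2 : (fun N : ℕ =>
      (((Finset.range N).filter
          (fun n => ∀ i : Fin k, baseDigit b x (a n + 1 + (i : ℕ)) = w i)).card : ℝ) / N)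
      = (fun N : ℕ =>
        (((Finset.range N).filter (fun n => Int.fract (u n) ∈ Set.Ico c c')).card : ℝ) / N) := by
    funext N
    rw [hfilter N]
  rw [heq2]
  exact h3
end
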